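/- arXiv:1802.05791 — 2 statements merged into one kernel-verified Lean document; each statement's English description precedes it below -/
import Mathlib

section
/- Let ε > 0 and let f, g : ℕ → ℕ and F, G : ℕ → ℕ satisfy ΣF(x) ≤ (1+ε)·Σf(x) and ΣG(x) ≤ (1+ε)·Σg(x) for all x. Then for every w, Σ(F ∗ G)(w) ≤ (1+ε)²·Σ(f ∗ g)(w). -/
/-- Prefix sum: `psum f x = ∑_{y ≤ x} f y`. -/
def psum (f : ℕ → ℕ) (x : ℕ) : ℕ := ∑ y ∈ Finset.range (x + 1), f y

/-- Convolution: `(f ∗ g)(w) = ∑_{x+y=w} f(x)·g(y)`. -/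
def conv (f g : ℕ → ℕ) (w : ℕ) : ℕ := ∑ x ∈ Finset.range (w + 1), f x * g (w - x)

/-- Triangle sum swap. -/
lemma tri_eq (h : ℕ → ℕ → ℕ) :
    ∀ w, ∑ u ∈ Finset.range (w+1), ∑ x ∈ Finset.range (u+1), h x (u-x)
      = ∑ x ∈ Finset.range (w+1), ∑ v ∈ Finset.range (w-x+1), h x v := by
  intro w
  induction w with
  | zero => simp
  | succ n ih =>
    rw [Finset.sum_range_succ, ih,
      Finset.sum_range_succ (fun x => ∑ v ∈ Finset.range (n+1-x+1), h x v)]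
    have hcong : ∑ x ∈ Finset.range (n+1), ∑ v ∈ Finset.range (n+1-x+1), h x v
        = ∑ x ∈ Finset.range (n+1), (∑ v ∈ Finset.range (n-x+1), h x v + h x (n+1-x)) := by
      apply Finset.sum_congr rfl
      intro x hx
      have hxn : x ≤ n := Nat.lt_succ_iff.mp (Finset.mem_range.mp hx)
      have h' : n + 1 - x = (n - x) + 1 := by omega
      rw [h', Finset.sum_range_succ]
    rw [hcong, Finset.sum_add_distrib]
    have hlast : ∑ x ∈ Finset.range (n+1+1), h x (n+1-x)
        = ∑ x ∈ Finset.range (n+1), h x (n+1-x) + h (n+1) 0 := by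
      rw [Finset.sum_range_succ]; simp
    rw [hlast]
    simp [Nat.sub_self]
    ring

/-- Triangle sum symmetry. -/
lemma tri_symm (h : ℕ → ℕ → ℕ) (w : ℕ) :
    ∑ x ∈ Finset.range (w+1), ∑ v ∈ Finset.range (w-x+1), h x v
      = ∑ v ∈ Finset.range (w+1), ∑ x ∈ Finset.range (w-v+1), h x v := by
  rw [← tri_eq h w, ← tri_eq (fun v x => h x v) w]
  apply Finset.sum_congr rfl
  intro u _
  rw [← Finset.sum_range_reflect]
  apply Finset.sum_congr rfl
  intro x hx
  have hxu : x ≤ u := Nat.lt_succ_iff.mp (Finset.mem_range.mp hx)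
  congr 1
  omega

lemma psum_conv (F G : ℕ → ℕ) (w : ℕ) :
    psum (conv F G) w = ∑ x ∈ Finset.range (w+1), F x * psum G (w-x) := by
  simp only [psum, conv]
  rw [tri_eq (fun x v => F x * G v) w]
  simp [Finset.mul_sum]

lemma swap_sum (F g : ℕ → ℕ) (w : ℕ) :
    ∑ x ∈ Finset.range (w+1), F x * psum g (w-x)
      = ∑ y ∈ Finset.range (w+1), g y * psum F (w-y) := by
  have h1 : ∑ x ∈ Finset.range (w+1), F x * psum g (w-x)
      = ∑ x ∈ Finset.range (w+1), ∑ v ∈ Finset.range (w-x+1), F x * g v := by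
    simp [psum, Finset.mul_sum]
  have h2 : ∑ y ∈ Finset.range (w+1), g y * psum F (w-y)
      = ∑ v ∈ Finset.range (w+1), ∑ x ∈ Finset.range (w-v+1), F x * g v := by
    simp only [psum, Finset.mul_sum]
    apply Finset.sum_congr rfl
    intro v _
    apply Finset.sum_congr rfl
    intro x _
    ring
  rw [h1, h2, tri_symm (fun x v => F x * g v) w]

theorem psum_conv_upper (ε : ℝ) (hε : 0 < ε) (f g F G : ℕ → ℕ)
    (hF : ∀ x, (psum F x : ℝ) ≤ (1 + ε) * psum f x)
    (hG : ∀ x, (psum G x : ℝ) ≤ (1 + ε) * psum g x) :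
    ∀ w, (psum (conv F G) w : ℝ) ≤ (1 + ε) ^ 2 * psum (conv f g) w := by
  intro w
  have hε1 : (0:ℝ) ≤ 1 + ε := by linarith
  have step1 : (psum (conv F G) w : ℝ)
      ≤ (1 + ε) * ∑ x ∈ Finset.range (w+1), (F x : ℝ) * psum g (w-x) := by
    rw [psum_conv F G w]
    push_cast
    rw [Finset.mul_sum]
    apply Finset.sum_le_sum
    intro x _
    calc (F x : ℝ) * psum G (w-x) ≤ (F x : ℝ) * ((1+ε) * psum g (w-x)) :=
          mul_le_mul_of_nonneg_left (hG (w-x)) (by positivity)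
      _ = (1+ε) * ((F x : ℝ) * psum g (w-x)) := by ring
  have step2 : (∑ x ∈ Finset.range (w+1), (F x : ℝ) * psum g (w-x))
      ≤ (1 + ε) * psum (conv f g) w := by
    have hs : (∑ x ∈ Finset.range (w+1), (F x : ℝ) * psum g (w-x))
        = ∑ y ∈ Finset.range (w+1), (g y : ℝ) * psum F (w-y) := by
      exact_mod_cast congrArg (Nat.cast : ℕ → ℝ) (swap_sum F g w)
    have hfg : (psum (conv f g) w : ℝ)
        = ∑ y ∈ Finset.range (w+1), (g y : ℝ) * psum f (w-y) := by
      rw [psum_conv f g w, swap_sum f g w]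
      push_cast; rfl
    rw [hs, hfg, Finset.mul_sum]
    apply Finset.sum_le_sum
    intro y _
    calc (g y : ℝ) * psum F (w-y) ≤ (g y : ℝ) * ((1+ε) * psum f (w-y)) :=
          mul_le_mul_of_nonneg_left (hF (w-y)) (by positivity)
      _ = (1+ε) * ((g y : ℝ) * psum f (w-y)) := by ring
  calc (psum (conv F G) w : ℝ)
      ≤ (1 + ε) * ∑ x ∈ Finset.range (w+1), (F x : ℝ) * psum g (w-x) := step1
    _ ≤ (1 + ε) * ((1 + ε) * psum (conv f g) w) := by
        apply mul_le_mul_of_nonneg_left step2 hε1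
    _ = (1 + ε) ^ 2 * psum (conv f g) w := by ring
end

section
/- Let f : ℕ → ℕ be finitely supported and δ > 0. Then the sparsified function f̃ is a (1+δ)-approximation of Σf, i.e., Σf(x) ≤ f̃(x) ≤ (1+δ)·Σf(x) for all x ∈ ℕ. -/
open Classical

/-- Threshold sequence: `r 0 = 0`, `r (i+1) = max (r i + 1) ⌊(1+δ)·r i⌋`. -/
noncomputable def rseq (δ : ℝ) : ℕ → ℕ
  | 0 => 0
  | i + 1 => max (rseq δ i + 1) ⌊(1 + δ) * (rseq δ i : ℝ)⌋₊

/-- The set of breakpoints: for every index `i` such that some `x` has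
`Σf(x) ≥ r_i`, the least such `x` is a breakpoint. -/
noncomputable def breakpoints (f : ℕ → ℕ) (δ : ℝ) : Set ℕ :=
  {b | ∃ i, (∃ x, rseq δ i ≤ psum f x) ∧ b = sInf {x | rseq δ i ≤ psum f x}}

/-- The sparsified function `f̃`: if some breakpoint lies strictly above `x`,
`f̃(x) = Σf(succ(x) - 1)` where `succ(x)` is the least breakpoint `> x`;
otherwise `f̃(x) = M`, the total sum of `f`. -/
noncomputable def sparsified (f : ℕ →₀ ℕ) (δ : ℝ) (x : ℕ) : ℕ :=
  if (breakpoints f δ ∩ Set.Ioi x).Nonempty then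
    psum f (sInf (breakpoints f δ ∩ Set.Ioi x) - 1)
  else ∑ y ∈ f.support, f y

lemma psum_mono (f : ℕ → ℕ) : Monotone (psum f) := fun a b h =>
  Finset.sum_le_sum_of_subset (Finset.range_subset_range.2 (by omega))

lemma psum_le_total (f : ℕ →₀ ℕ) (x : ℕ) : psum f x ≤ ∑ y ∈ f.support, f y := by
  rw [psum, show ∑ y ∈ Finset.range (x+1), f y
      = ∑ y ∈ Finset.range (x+1) ∩ f.support, f y from
    (Finset.sum_subset Finset.inter_subset_left (by
      intro y hy hyn
      by_contra hc
      exact hyn (Finset.mem_inter.2 ⟨hy, Finsupp.mem_support_iff.2 hc⟩))).symm]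
  exact Finset.sum_le_sum_of_subset Finset.inter_subset_right

lemma total_reached (f : ℕ →₀ ℕ) : ∃ X, psum f X = ∑ y ∈ f.support, f y := by
  refine ⟨f.support.sup id, ?_⟩
  rw [psum]
  refine (Finset.sum_subset ?_ ?_).symm
  · intro y hy
    have : id y ≤ f.support.sup id := Finset.le_sup hy
    simp only [id_eq] at this
    simp only [Finset.mem_range]
    omega
  · intro y _ hyn
    exact Finsupp.notMem_support_iff.1 hyn

lemma rseq_succ_ge (δ : ℝ) (i : ℕ) : rseq δ i + 1 ≤ rseq δ (i+1) := le_max_left _ _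

lemma rseq_mono (δ : ℝ) : Monotone (rseq δ) :=
  monotone_nat_of_le_succ fun i => by have := rseq_succ_ge δ i; omega

lemma rseq_ge_id (δ : ℝ) (i : ℕ) : i ≤ rseq δ i := by
  induction i with
  | zero => simp
  | succ n ih => have := rseq_succ_ge δ n; omega

lemma rseq_key {δ : ℝ} (hδ : 0 < δ) {n i : ℕ} (h : n < rseq δ (i+1)) :
    (n : ℝ) ≤ (1 + δ) * rseq δ i := by
  have h' : n < max (rseq δ i + 1) ⌊(1 + δ) * (rseq δ i : ℝ)⌋₊ := h
  rcases lt_max_iff.1 h' with h1 | h2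
  · have : (n : ℝ) ≤ rseq δ i := by exact_mod_cast Nat.lt_succ_iff.1 h1
    calc (n : ℝ) ≤ rseq δ i := this
      _ ≤ (1 + δ) * rseq δ i := le_mul_of_one_le_left (by positivity) (by linarith)
  · have h3 : (n : ℝ) ≤ ⌊(1 + δ) * (rseq δ i : ℝ)⌋₊ := by exact_mod_cast le_of_lt h2
    exact h3.trans (Nat.floor_le (by positivity))

theorem sparsified_approx (f : ℕ →₀ ℕ) (δ : ℝ) (hδ : 0 < δ) :
    ∀ x, psum f x ≤ sparsified f δ x ∧
      (sparsified f δ x : ℝ) ≤ (1 + δ) * psum f x := by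
  intro x
  -- find i with rseq δ i ≤ psum f x < rseq δ (i+1)
  have hex : ∃ j, psum f x < rseq δ j :=
    ⟨psum f x + 1, lt_of_lt_of_le (by omega) (rseq_ge_id δ _)⟩
  obtain ⟨i, hi1, hi2⟩ : ∃ i, rseq δ i ≤ psum f x ∧ psum f x < rseq δ (i+1) := by
    set j := Nat.find hex with hj
    have hjs : psum f x < rseq δ j := Nat.find_spec hex
    have hj0 : j ≠ 0 := by
      intro h0
      rw [h0] at hjs
      simp [rseq] at hjs
    refine ⟨j - 1, ?_, by rwa [Nat.sub_add_cancel (Nat.pos_of_ne_zero hj0)]⟩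
    have := Nat.find_min hex (m := j - 1) (by omega)
    omega
  have hrle : (rseq δ i : ℝ) ≤ psum f x := by exact_mod_cast hi1
  by_cases h : (breakpoints f δ ∩ Set.Ioi x).Nonempty
  · rw [sparsified, if_pos h]
    set b := sInf (breakpoints f δ ∩ Set.Ioi x) with hbdef
    obtain ⟨hbB, hbx⟩ := Nat.sInf_mem h
    simp only [Set.mem_Ioi] at hbx
    obtain ⟨j, hjex, hjeq⟩ := hbB
    have hxj : psum f x < rseq δ j := by
      by_contra hc
      have : sInf {x | rseq δ j ≤ psum f x} ≤ x := Nat.sInf_le (not_lt.1 hc)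
      omega
    obtain ⟨z, hz⟩ := hjex
    have hij : i + 1 ≤ j := by
      by_contra hc
      exact absurd (le_trans (rseq_mono δ (by omega : j ≤ i)) hi1) (not_le.2 hxj)
    have hSi : ∃ z, rseq δ (i+1) ≤ psum f z := ⟨z, le_trans (rseq_mono δ hij) hz⟩
    set c := sInf {x | rseq δ (i+1) ≤ psum f x} with hcdef
    have hcB : c ∈ breakpoints f δ := ⟨i+1, hSi, rfl⟩
    have hcx : x < c := by
      by_contra hc
      have hm : rseq δ (i+1) ≤ psum f c := Nat.sInf_mem hSi
      exact absurd (le_trans hm (psum_mono f (not_lt.1 hc))) (not_le.2 hi2)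
    have hbc : b ≤ c := Nat.sInf_le ⟨hcB, hcx⟩
    have hkey : psum f (b-1) < rseq δ (i+1) := by
      by_contra hc
      have : c ≤ b - 1 := Nat.sInf_le (not_lt.1 hc)
      omega
    refine ⟨psum_mono f (by omega), ?_⟩
    calc (psum f (b-1) : ℝ) ≤ (1 + δ) * rseq δ i := rseq_key hδ hkey
      _ ≤ (1 + δ) * psum f x := by
          have h1 : (0:ℝ) < 1 + δ := by linarith
          exact mul_le_mul_of_nonneg_left hrle h1.le
  · rw [sparsified, if_neg h]
    obtain ⟨X, hX⟩ := total_reached f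
    have hM : (∑ y ∈ f.support, f y) < rseq δ (i+1) := by
      by_contra hc
      have hSi : ∃ z, rseq δ (i+1) ≤ psum f z := ⟨X, by omega⟩
      set c := sInf {x | rseq δ (i+1) ≤ psum f x} with hcdef
      have hcB : c ∈ breakpoints f δ := ⟨i+1, hSi, rfl⟩
      have hcx : x < c := by
        by_contra hc2
        have hm : rseq δ (i+1) ≤ psum f c := Nat.sInf_mem hSi
        exact absurd (le_trans hm (psum_mono f (not_lt.1 hc2))) (not_le.2 hi2)
      exact h ⟨c, hcB, hcx⟩
    refine ⟨psum_le_total f x, ?_⟩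
    calc ((∑ y ∈ f.support, f y : ℕ) : ℝ) ≤ (1 + δ) * rseq δ i := rseq_key hδ hM
      _ ≤ (1 + δ) * psum f x := by
          have h1 : (0:ℝ) < 1 + δ := by linarith
          exact mul_le_mul_of_nonneg_left hrle h1.le
end
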